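/- Let D = (V, E, w) be a vertex-weighted oriented graph with edge ideal I(D) = (x_i x_j^{w_j} : x_i → x_j ∈ E), and let z be a leaf of D with unique in-neighbor y (so the edge is y → z). Then for any integer t ≥ 2: (I(D)^t : y z^{w_z}) = I(D)^{t−1}. -/

import Mathlib

open MvPolynomial

noncomputable section

set_option linter.unusedSectionVars false

namespace PaperRegAux

variable {k : Type} [Field k] {V : Type} [DecidableEq V]

def expv (w : V → ℕ) (e : V × V) : V →₀ ℕ :=
  Finsupp.single e.1 1 + Finsupp.single e.2 (w e.2)

def sumSet (G : Set (V →₀ ℕ)) (n : ℕ) : Set (V →₀ ℕ) :=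
  {a | ∃ m : Multiset (V →₀ ℕ), Multiset.card m = n ∧ (∀ x ∈ m, x ∈ G) ∧ m.sum = a}

lemma span_pow_eq (G : Set (V →₀ ℕ)) (n : ℕ) :
    (Ideal.span ((fun a => monomial a (1 : k)) '' G)) ^ n
      = Ideal.span ((fun a => monomial a (1 : k)) '' sumSet G n) := by
  induction n with
  | zero =>
      rw [pow_zero]
      have h0 : sumSet G 0 = {0} := by
        ext a
        constructor
        · rintro ⟨m, hc, -, hs⟩
          rw [Multiset.card_eq_zero] at hc
          subst hc
          simpa using hs.symm
        · rintro rfl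
          exact ⟨0, by simp, by simp, by simp⟩
      rw [h0]
      simp [Ideal.one_eq_top, Ideal.span_singleton_one]
  | succ n ih =>
      rw [pow_succ, ih, Ideal.span_mul_span']
      congr 1
      ext f
      constructor
      · intro hf
        rw [Set.mem_mul] at hf
        obtain ⟨x, ⟨a, ⟨m, hc, hm, hs⟩, rfl⟩, yy, ⟨g, hg, rfl⟩, rfl⟩ := hf
        refine ⟨a + g, ⟨g ::ₘ m, by simp [hc], ?_, by simp [hs, add_comm]⟩, ?_⟩
        · intro x hx
          rcases Multiset.mem_cons.1 hx with h | h
          · subst h; exact hg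
          · exact hm x h
        · simp [monomial_mul]
      · rintro ⟨a, ⟨m, hc, hm, hs⟩, rfl⟩
        have hne : m ≠ 0 := by
          intro h; rw [h] at hc; simp at hc
        obtain ⟨g, hg⟩ := Multiset.exists_mem_of_ne_zero hne
        have hme : g ::ₘ m.erase g = m := Multiset.cons_erase hg
        rw [Set.mem_mul]
        refine ⟨monomial ((m.erase g).sum) 1, ⟨(m.erase g).sum,
          ⟨m.erase g, ?_, fun x hx => hm x (Multiset.mem_of_mem_erase hx), rfl⟩, rfl⟩,
          monomial g 1, ⟨g, hm g hg, rfl⟩, ?_⟩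
        · have := congrArg Multiset.card hme
          simp at this
          omega
        · rw [monomial_mul, one_mul]
          congr 1
          rw [← hs, ← hme]
          simp [add_comm]

lemma key_lemma
    (E : Finset (V × V)) (w : V → ℕ)
    (hloop : ∀ e ∈ E, e.1 ≠ e.2)
    (y z : V) (hyz : (y, z) ∈ E)
    (hleaf : ∀ e ∈ E, e.1 = z ∨ e.2 = z → e = (y, z))
    (t : ℕ) (ht : 1 ≤ t)
    (xi a : V →₀ ℕ) (ha : a ∈ sumSet (expv w '' ↑E) t)
    (hle : a ≤ xi + expv w (y, z)) :
    ∃ b ∈ sumSet (expv w '' ↑E) (t - 1), b ≤ xi := by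
  obtain ⟨m, hc, hm, hs⟩ := ha
  set μ : V →₀ ℕ := expv w (y, z) with hμ
  have hyzne : y ≠ z := hloop (y, z) hyz
  have sumApply : ∀ (s : Multiset (V →₀ ℕ)) (v : V),
      s.sum v = (s.map (fun g : V →₀ ℕ => g v)).sum := by
    intro s v
    simpa using map_multiset_sum (Finsupp.applyAddHom (M := ℕ) v) s
  have eraseCard : ∀ g ∈ m, Multiset.card (m.erase g) = t - 1 := by
    intro g hg
    have := congrArg Multiset.card (Multiset.cons_erase hg)
    simp at this
    omega
  have eraseSum : ∀ g ∈ m, a = g + (m.erase g).sum := by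
    intro g hg
    rw [← hs, ← Multiset.sum_cons, Multiset.cons_erase hg]
  have eraseMem : ∀ g ∈ m, (m.erase g).sum ∈ sumSet (expv w '' ↑E) (t - 1) := by
    intro g hg
    exact ⟨m.erase g, eraseCard g hg, fun x hx => hm x (Multiset.mem_of_mem_erase hx), rfl⟩
  by_cases hmu : μ ∈ m
  · refine ⟨(m.erase μ).sum, eraseMem μ hmu, ?_⟩
    have := eraseSum μ hmu
    have h2 : (m.erase μ).sum + μ ≤ xi + μ := by
      rw [add_comm] at this
      rw [← this]; exact hle
    exact le_of_add_le_add_right h2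
  · -- μ ∉ m : every generator in m has z-coordinate 0
    have hz : ∀ g ∈ m, g z = 0 := by
      intro g hg
      obtain ⟨e, heE, heg⟩ := hm g hg
      by_contra hgz
      have h1 : e.1 = z ∨ e.2 = z := by
        subst heg
        simp only [expv, Finsupp.add_apply, Finsupp.single_apply] at hgz
        by_contra hcon
        push_neg at hcon
        rw [if_neg hcon.1, if_neg hcon.2] at hgz
        exact hgz rfl
      have he : e = (y, z) := hleaf e heE h1
      apply hmu
      have hμg : μ = g := by rw [hμ, ← he]; exact heg
      rw [hμg]; exact hg
    have haz : a z = 0 := by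
      rw [← hs, sumApply]
      apply Multiset.sum_eq_zero
      intro x hx
      obtain ⟨g, hg, rfl⟩ := Multiset.mem_map.1 hx
      exact hz g hg
    have hμy : μ y = 1 := by
      simp [hμ, expv, Finsupp.single_apply, hyzne, Ne.symm hyzne]
    have hμv : ∀ v, v ≠ y → v ≠ z → μ v = 0 := by
      intro v hvy hvz
      simp [hμ, expv, Finsupp.single_apply, Ne.symm hvy, Ne.symm hvz]
    by_cases hax : a ≤ xi
    · have hne : m ≠ 0 := by intro h; rw [h] at hc; simp at hc; omega
      obtain ⟨g, hg⟩ := Multiset.exists_mem_of_ne_zero hne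
      refine ⟨(m.erase g).sum, eraseMem g hg, le_trans ?_ hax⟩
      have := eraseSum g hg
      calc (m.erase g).sum ≤ g + (m.erase g).sum := le_add_self
        _ = a := (eraseSum g hg).symm
    · rw [Finsupp.le_def] at hax
      push_neg at hax
      obtain ⟨v, hv⟩ := hax
      have hvy : v = y := by
        by_contra hvy
        have hlev : a v ≤ xi v + μ v := hle v
        rcases eq_or_ne v z with rfl | hvz
        · omega
        · rw [hμv v hvy hvz] at hlev; omega
      subst hvy
      have hley : a v ≤ xi v + 1 := by
        have := hle v
        rwa [Finsupp.add_apply, hμy] at this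
      -- some generator has positive v(=y) coordinate
      have hpos : ∃ g ∈ m, 1 ≤ g v := by
        by_contra hcon
        push_neg at hcon
        have : a v = 0 := by
          rw [← hs, sumApply]
          apply Multiset.sum_eq_zero
          intro x hx
          obtain ⟨g, hg, rfl⟩ := Multiset.mem_map.1 hx
          have := hcon g hg; omega
        omega
      obtain ⟨g, hg, hgv⟩ := hpos
      refine ⟨(m.erase g).sum, eraseMem g hg, ?_⟩
      rw [Finsupp.le_def]
      intro u
      have hau : a u = g u + (m.erase g).sum u := by
        rw [eraseSum g hg]; rfl
      rcases eq_or_ne u v with rfl | huv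
      · omega
      · rcases eq_or_ne u z with rfl | huz
        · have : a u = 0 := haz
          omega
        · have := hle u
          rw [Finsupp.add_apply, hμv u huv huz] at this
          omega

end PaperRegAux

namespace PaperReg

variable (k : Type) [Field k] (σ : Type)

/-- A graded free resolution of a homogeneous ideal `I` of `MvPolynomial σ k`:
finite-rank free modules `Fin (rk i) →₀ S` with basis elements of degrees `deg i`,
degree-preserving differentials, exact, augmented onto `I`. -/
structure GradedFreeRes (I : Ideal (MvPolynomial σ k)) where
  rk : ℕ → ℕ
  deg : (i : ℕ) → Fin (rk i) → ℕ
  aug : (Fin (rk 0) →₀ MvPolynomial σ k) →ₗ[MvPolynomial σ k] MvPolynomial σ k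
  d : (i : ℕ) →
    ((Fin (rk (i + 1)) →₀ MvPolynomial σ k) →ₗ[MvPolynomial σ k] (Fin (rk i) →₀ MvPolynomial σ k))
  aug_range : LinearMap.range aug = I
  exact_zero : LinearMap.range (d 0) = LinearMap.ker aug
  exact_succ : ∀ i, LinearMap.range (d (i + 1)) = LinearMap.ker (d i)
  aug_graded : ∀ b, (aug (Finsupp.single b 1)).IsHomogeneous (deg 0 b)
  d_graded : ∀ i b c, (d i (Finsupp.single b 1)) c = 0 ∨
    ∃ m, deg (i + 1) b = deg i c + m ∧ ((d i (Finsupp.single b 1)) c).IsHomogeneous m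

/-- The `(i,j)`-th graded Betti number of `I`: the minimal number of degree-`j` basis
elements in homological position `i`, over all graded free resolutions of `I`
(achieved by the minimal graded free resolution). -/
def betti (I : Ideal (MvPolynomial σ k)) (i j : ℕ) : ℕ :=
  sInf { r | ∃ F : GradedFreeRes k σ I,
    r = (Finset.univ.filter (fun b => F.deg i b = j)).card }

/-- Castelnuovo–Mumford regularity: `reg I = max { j - i | betti I i j ≠ 0 }`. -/
def reg (I : Ideal (MvPolynomial σ k)) : ℕ :=
  sSup { r | ∃ i j : ℕ, betti k σ I i j ≠ 0 ∧ r = j - i }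

/-- The monic monomial with exponent vector `a`. -/
def mon (a : σ →₀ ℕ) : MvPolynomial σ k := monomial a 1

/-- `I` is a monomial ideal. -/
def IsMonomialIdeal (I : Ideal (MvPolynomial σ k)) : Prop :=
  ∃ A : Set (σ →₀ ℕ), I = Ideal.span (mon k σ '' A)

/-- The exponent vectors of the unique minimal set of monomial generators of a
monomial ideal: monomials of `I` minimal with respect to divisibility. -/
def minGens (I : Ideal (MvPolynomial σ k)) : Set (σ →₀ ℕ) :=
  { a | mon k σ a ∈ I ∧ ∀ b : σ →₀ ℕ, mon k σ b ∈ I → b ≤ a → b = a }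

/-- The support of a monomial ideal: variables appearing in its minimal generators. -/
def isupp (I : Ideal (MvPolynomial σ k)) : Set σ :=
  ⋃ a ∈ minGens k σ I, ↑a.support

variable (V : Type) [Fintype V] [DecidableEq V]

/-- The edge-ideal generator attached to a directed edge `e` of a vertex-weighted
oriented graph: `x_{e.1} * x_{e.2} ^ (w e.2)`. -/
def edgeMon (w : V → ℕ) (e : V × V) : MvPolynomial V k :=
  monomial (Finsupp.single e.1 1 + Finsupp.single e.2 (w e.2)) 1

/-- The edge ideal of a vertex-weighted oriented graph with edge set `E`. -/
def edgeIdeal (E : Finset (V × V)) (w : V → ℕ) : Ideal (MvPolynomial V k) :=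
  Ideal.span (edgeMon k V w '' ↑E)

/-- The underlying undirected simple graph of the directed edge set `E`. -/
def underlying (E : Finset (V × V)) : SimpleGraph V where
  Adj a b := a ≠ b ∧ ((a, b) ∈ E ∨ (b, a) ∈ E)
  symm := ⟨fun a b h => ⟨h.1.symm, h.2.symm⟩⟩
  loopless := ⟨fun a h => h.1 rfl⟩

/-- The degree of a vertex in the underlying graph. -/
def degOf (E : Finset (V × V)) (v : V) : ℕ :=
  (E.filter (fun e => e.1 = v ∨ e.2 = v)).card
/-- if `z` is a leaf of the vertex-weighted oriented graph `D` with
unique in-neighbour `y` (its only incident edge being `y → z`), then for `t ≥ 2`,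
`(I(D)^t : y z^{w_z}) = I(D)^{t-1}`. -/
theorem colon_power_leaf
    (E : Finset (V × V)) (w : V → ℕ) (hw : ∀ v, 1 ≤ w v)
    (hloop : ∀ e ∈ E, e.1 ≠ e.2)
    (y z : V) (hyz : (y, z) ∈ E)
    (hleaf : ∀ e ∈ E, e.1 = z ∨ e.2 = z → e = (y, z))
    (t : ℕ) (ht : 2 ≤ t) :
    Submodule.colon ((edgeIdeal k V E w) ^ t)
        (Ideal.span {mon k V (Finsupp.single y 1 + Finsupp.single z (w z))}) =
      (edgeIdeal k V E w) ^ (t - 1) := by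
  classical
  have hIeq : edgeIdeal k V E w
      = Ideal.span ((fun a => monomial a (1 : k)) '' (PaperRegAux.expv w '' ↑E)) := by
    rw [edgeIdeal, Set.image_image]
    rfl
  ext f
  rw [Ideal.mem_colon_span_singleton]
  constructor
  · intro h
    rw [hIeq, PaperRegAux.span_pow_eq, mem_ideal_span_monomial_image] at h
    rw [hIeq, PaperRegAux.span_pow_eq, mem_ideal_span_monomial_image]
    intro xi hxi
    have hco : coeff (xi + PaperRegAux.expv w (y, z))
        (f * monomial (PaperRegAux.expv w (y, z)) (1 : k)) = coeff xi f := by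
      rw [coeff_mul_monomial, mul_one]
    have hsupp : xi + PaperRegAux.expv w (y, z)
        ∈ (f * monomial (PaperRegAux.expv w (y, z)) (1 : k)).support := by
      rw [mem_support_iff, hco]
      exact mem_support_iff.1 hxi
    obtain ⟨a, ha, hle⟩ := h _ hsupp
    exact PaperRegAux.key_lemma E w hloop y z hyz hleaf t (by omega) xi a ha hle
  · intro h
    have hpow : (edgeIdeal k V E w) ^ t
        = (edgeIdeal k V E w) ^ (t - 1) * edgeIdeal k V E w := by
      rw [← pow_succ]
      congr 1
      omega
    rw [hpow]
    exact Ideal.mul_mem_mul h (Ideal.subset_span ⟨(y, z), hyz, rfl⟩)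


end PaperReg
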